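/- arXiv:2307.12415 — 2 statements merged into one kernel-verified Lean document; each statement's English description precedes it below -/
import Mathlib

section
/- Let p be a prime and let R be a commutative ring in which p·1 = 0. If a sequence x : ℕ → R satisfies x(0) = 1 and x(a)·x(b) = C(a+b, a)·x(a+b) for all a, b ∈ ℕ (where C(a+b, a) is the binomial coefficient, viewed in R via the canonical map ℕ → R), then x(a)^p = 0 for every a ≥ 1. -/
lemma prod_choose_mul_fact_pow (a k : ℕ) :
    (∏ i ∈ Finset.range k, ((i * a + a).choose a)) * (a.factorial) ^ k
      = (k * a).factorial := by
  induction k with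
  | zero => simp
  | succ k ih =>
    rw [Finset.prod_range_succ, pow_succ, Nat.succ_mul]
    have h := Nat.add_choose_mul_factorial_mul_factorial (k * a) a
    calc (∏ i ∈ Finset.range k, ((i * a + a).choose a)) * ((k * a + a).choose a)
          * (a.factorial ^ k * a.factorial)
        = ((∏ i ∈ Finset.range k, ((i * a + a).choose a)) * a.factorial ^ k)
          * ((k * a + a).choose a * a.factorial) := by ring
      _ = (k * a).factorial * ((k * a + a).choose a * a.factorial) := by rw [ih]
      _ = (k * a + a).choose a * (k*a).factorial * a.factorial := by ring
      _ = (k * a + a).factorial := by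
          rw [← h]

lemma prime_dvd_prod_choose (p a : ℕ) (hp : p.Prime) (ha : 1 ≤ a) :
    p ∣ ∏ i ∈ Finset.range p, ((i * a + a).choose a) := by
  haveI : Fact p.Prime := ⟨hp⟩
  set P := ∏ i ∈ Finset.range p, ((i * a + a).choose a) with hP
  have hPpos : 0 < P := Finset.prod_pos fun i _ => Nat.choose_pos (Nat.le_add_left a _)
  have key : P * (a.factorial) ^ p = (p * a).factorial := prod_choose_mul_fact_pow a p
  have hval : padicValNat p P + p * padicValNat p a.factorial
      = padicValNat p a.factorial + a := by
    have := padicValNat_factorial_mul (p := p) a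
    rw [← this, ← key, padicValNat.mul hPpos.ne' (pow_ne_zero _ a.factorial_ne_zero),
      padicValNat.pow]
  -- (p-1) * v(a!) ≤ a - 1 < a
  have hdig : 1 ≤ (p.digits a).sum := by
    rcases Nat.eq_zero_or_pos (p.digits a).sum with h | h
    · exfalso
      have hz : ∀ d ∈ p.digits a, d = 0 := by
        intro d hd
        exact Nat.eq_zero_of_le_zero (h ▸ List.single_le_sum (fun _ _ => Nat.zero_le _) _ hd)
      have hnil : p.digits a ≠ [] := Nat.digits_ne_nil_iff_ne_zero.mpr (by omega)
      have hlast := Nat.getLast_digit_ne_zero p (show a ≠ 0 by omega)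
      exact hlast (hz _ (List.getLast_mem hnil))
    · exact h
  have hlt : (p - 1) * padicValNat p a.factorial < a := by
    have := sub_one_mul_padicValNat_factorial (p := p) a
    omega
  obtain ⟨q, rfl⟩ : ∃ q, p = q + 1 := ⟨p - 1, (Nat.succ_pred_eq_of_pos hp.pos).symm⟩
  simp only [Nat.add_sub_cancel, add_mul, one_mul] at hlt hval
  have : 1 ≤ padicValNat (q + 1) P := by
    set v := padicValNat (q + 1) a.factorial
    set t := q * v
    omega
  exact dvd_of_one_le_padicValNat this

/-- Let `p` be a prime and `R` a commutative ring with `p·1 = 0`.  If `x : ℕ → R`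
satisfies `x 0 = 1` and `x a * x b = C(a+b, a) * x (a+b)` for all `a b`, then
`x a ^ p = 0` for every `a ≥ 1`. -/
theorem statement5 {R : Type*} [CommRing R] (p : ℕ) (hp : p.Prime)
    (hchar : (p : R) = 0) (x : ℕ → R) (h0 : x 0 = 1)
    (hmul : ∀ a b : ℕ, x a * x b = ((a + b).choose a : R) * x (a + b))
    (a : ℕ) (ha : 1 ≤ a) :
    x a ^ p = 0 := by
  have key : ∀ k : ℕ, x a ^ k
      = ((∏ i ∈ Finset.range k, ((i * a + a).choose a) : ℕ) : R) * x (k * a) := by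
    intro k
    induction k with
    | zero => simp [h0]
    | succ k ih =>
      have hsym : (k * a + a).choose (k * a) = (k * a + a).choose a := by
        rw [← Nat.choose_symm (Nat.le_add_left a (k * a))]
        congr 1
        omega
      rw [pow_succ, ih, mul_assoc, hmul (k * a) a, hsym, Finset.prod_range_succ,
        Nat.cast_mul, Nat.succ_mul]
      ring
  rw [key p]
  obtain ⟨c, hc⟩ := prime_dvd_prod_choose p a hp ha
  rw [hc]
  push_cast
  rw [hchar]
  ring
end

section
/- The map Λ belongs to Coind'(k), the coinduction of the trivial one-dimensional U'(𝔥)-module k, and for every H ∈ 𝔥 and every u ∈ U'(𝔤) one has Λ(u·ι'(H)) = trad_{𝔤/𝔥}(H)·Λ(u); equivalently, for every H ∈ 𝔥, the action of H on Λ in the U'(𝔤)-module Coind'(k) is multiplication by trad_{𝔤/𝔥}(H). -/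
noncomputable section

/-- The relation on `U(𝔤)` whose closure defines the restricted enveloping algebra. -/
def rRel (k : Type*) [Field k] (L : Type*) [LieRing L] [LieAlgebra k L]
    (p : ℕ) (pOp : L → L) :
    UniversalEnvelopingAlgebra k L → UniversalEnvelopingAlgebra k L → Prop :=
  fun x y => ∃ X : L,
    x = UniversalEnvelopingAlgebra.ι k X ^ p ∧ y = UniversalEnvelopingAlgebra.ι k (pOp X)

/-- The restricted enveloping algebra `U'(𝔤) = U(𝔤)/I`. -/
abbrev RUEA (k : Type*) [Field k] (L : Type*) [LieRing L] [LieAlgebra k L]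
    (p : ℕ) (pOp : L → L) : Type _ :=
  RingQuot (rRel k L p pOp)

/-- `ι' : 𝔤 → U'(𝔤)`, the composite of `ι` with the quotient map. -/
def rι (k : Type*) [Field k] {L : Type*} [LieRing L] [LieAlgebra k L]
    (p : ℕ) (pOp : L → L) (X : L) : RUEA k L p pOp :=
  RingQuot.mkAlgHom k (rRel k L p pOp) (UniversalEnvelopingAlgebra.ι k X)

/-- For `a ∈ {0,…,p−1}^n`, the ordered monomial `e^a = ι'(e_1)^{a_1} ⋯ ι'(e_n)^{a_n}`. -/
def eMonR (k : Type*) [Field k] {L : Type*} [LieRing L] [LieAlgebra k L]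
    (p : ℕ) (pOp : L → L) {n : ℕ} (e : Fin n → L) (a : Fin n → Fin p) :
    RUEA k L p pOp :=
  ((List.finRange n).map fun i => rι k p pOp (e i) ^ (a i : ℕ)).prod

/-- The endomorphism of `𝔤/𝔥` induced by `ad(h)` for `h ∈ 𝔥`. -/
def adQuot {k : Type*} [Field k] {L : Type*} [LieRing L] [LieAlgebra k L]
    (H : LieSubalgebra k L) (h : H) :
    (L ⧸ H.toSubmodule) →ₗ[k] (L ⧸ H.toSubmodule) :=
  Submodule.mapQ _ _ (LieAlgebra.ad k L (h : L)) (fun _ hx => H.lie_mem h.2 hx)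

/-- `trad_{𝔤/𝔥} : 𝔥 → k`, the trace of the adjoint action of `𝔥` on `𝔤/𝔥`. -/
def trad {k : Type*} [Field k] {L : Type*} [LieRing L] [LieAlgebra k L]
    (H : LieSubalgebra k L) (h : H) : k :=
  LinearMap.trace k (L ⧸ H.toSubmodule) (adQuot H h)

section Helpers

open List

attribute [local instance 100] LieRing.ofAssociativeRing

variable {k : Type*} [Field k] {L : Type*} [LieRing L] [LieAlgebra k L]

/-- Linear-map version of `rι`. -/
def rιL (p : ℕ) (pOp : L → L) : L →ₗ[k] RUEA k L p pOp :=
  ((RingQuot.mkAlgHom k (rRel k L p pOp)).toLinearMap.comp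
    (UniversalEnvelopingAlgebra.ι k).toLinearMap)

lemma rιL_apply (p : ℕ) (pOp : L → L) (x : L) : rιL (k := k) p pOp x = rι k p pOp x := rfl

lemma rι_mul_comm (p : ℕ) (pOp : L → L) (x y : L) :
    rι k p pOp x * rι k p pOp y = rι k p pOp y * rι k p pOp x + rι k p pOp ⁅x, y⁆ := by
  have h := (UniversalEnvelopingAlgebra.ι k (L := L)).map_lie x y
  rw [Ring.lie_def] at h
  simp only [rι, h, map_sub, map_mul]
  abel

lemma rι_pow (p : ℕ) (pOp : L → L) (x : L) :
    rι k p pOp x ^ p = rι k p pOp (pOp x) := by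
  simp only [rι, ← map_pow]
  exact RingQuot.mkAlgHom_rel k ⟨x, rfl, rfl⟩

/-- The product of a word in `U'(𝔤)`. -/
def pW (p : ℕ) (pOp : L → L) (l : List L) : RUEA k L p pOp := (l.map (rι k p pOp)).prod

@[simp] lemma pW_nil (p : ℕ) (pOp : L → L) : pW (k := k) p pOp [] = 1 := rfl

@[simp] lemma pW_cons (p : ℕ) (pOp : L → L) (x : L) (l : List L) :
    pW (k := k) p pOp (x :: l) = rι k p pOp x * pW p pOp l := by
  simp [pW]

@[simp] lemma pW_append (p : ℕ) (pOp : L → L) (l₁ l₂ : List L) :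
    pW (k := k) p pOp (l₁ ++ l₂) = pW p pOp l₁ * pW p pOp l₂ := by
  simp [pW]

@[simp] lemma pW_singleton (p : ℕ) (pOp : L → L) (x : L) :
    pW (k := k) p pOp [x] = rι k p pOp x := by
  simp [pW]

lemma pW_replicate (p : ℕ) (pOp : L → L) (c : ℕ) (x : L) :
    pW (k := k) p pOp (replicate c x) = rι k p pOp x ^ c := by
  simp [pW, List.map_replicate, List.prod_replicate]

/-- Span of words of length at most `m`. -/
def Wsp (p : ℕ) (pOp : L → L) (m : ℕ) : Submodule k (RUEA k L p pOp) :=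
  Submodule.span k {u | ∃ l : List L, l.length ≤ m ∧ u = pW p pOp l}

lemma Wsp_mono (p : ℕ) (pOp : L → L) {m m' : ℕ} (h : m ≤ m') :
    Wsp (k := k) p pOp m ≤ Wsp p pOp m' :=
  Submodule.span_mono (fun _ ⟨l, hl, hu⟩ => ⟨l, hl.trans h, hu⟩)

lemma pW_mem_Wsp (p : ℕ) (pOp : L → L) {l : List L} {m : ℕ} (h : l.length ≤ m) :
    pW (k := k) p pOp l ∈ Wsp p pOp m :=
  Submodule.subset_span ⟨l, h, rfl⟩

lemma span_mul_mem {A : Type*} [Ring A] [Algebra k A] {s : Set A} {N : Submodule k A}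
    (ψ : A →ₗ[k] A) (h : ∀ x ∈ s, ψ x ∈ N) : ∀ z ∈ Submodule.span k s, ψ z ∈ N := by
  intro z hz
  have hle : Submodule.span k s ≤ N.comap ψ := Submodule.span_le.2 h
  exact hle hz

lemma Wsp_cons (p : ℕ) (pOp : L → L) {m : ℕ} (y : L) {z : RUEA k L p pOp}
    (hz : z ∈ Wsp (k := k) p pOp m) : rι k p pOp y * z ∈ Wsp p pOp (m + 1) := by
  refine span_mul_mem (LinearMap.mulLeft k (rι k p pOp y)) ?_ z hz
  rintro x ⟨l, hl, rfl⟩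
  exact Submodule.subset_span ⟨y :: l, by simpa using Nat.succ_le_succ hl, by simp⟩

lemma Wsp_mul_rι (p : ℕ) (pOp : L → L) {m : ℕ} (y : L) {z : RUEA k L p pOp}
    (hz : z ∈ Wsp (k := k) p pOp m) : z * rι k p pOp y ∈ Wsp p pOp (m + 1) := by
  refine span_mul_mem (LinearMap.mulRight k (rι k p pOp y)) ?_ z hz
  rintro x ⟨l, hl, rfl⟩
  refine Submodule.subset_span ⟨l ++ [y], by simpa using hl, by simp⟩

/-- Commuting a generator from the right to the left of a word. -/
lemma pW_mul_rι_eq (p : ℕ) (pOp : L → L) (y : L) :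
    ∀ l : List L, pW (k := k) p pOp l * rι k p pOp y =
      rι k p pOp y * pW p pOp l -
        ∑ t ∈ Finset.range l.length, pW p pOp (l.set t ⁅y, l.getD t 0⁆) := by
  intro l
  induction l with
  | nil => simp
  | cons x l ih =>
    have hlen : (x :: l).length = l.length + 1 := rfl
    rw [pW_cons, mul_assoc, ih, hlen, Finset.sum_range_succ']
    simp only [List.set_cons_succ, List.getD_cons_succ, List.set_cons_zero, List.getD_cons_zero,
      pW_cons]
    rw [mul_sub, Finset.mul_sum]
    have hc : rι k p pOp x * rι k p pOp y =
        rι k p pOp y * rι k p pOp x + rι k p pOp ⁅x, y⁆ := rι_mul_comm p pOp x y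
    have hxy : rι k p pOp ⁅y, x⁆ = - rι k p pOp ⁅x, y⁆ := by
      rw [← rιL_apply, ← rιL_apply, ← map_neg]
      congr 1
      rw [← lie_skew]
    rw [hxy, ← mul_assoc, hc, add_mul]
    simp only [mul_assoc, neg_mul]
    abel

section Lists

variable {n : ℕ}

/-- Expand exponents into a flat list of indices. -/
def ebl (d : Fin n → ℕ) (l : List (Fin n)) : List (Fin n) :=
  l.flatMap fun i => replicate (d i) i

@[simp] lemma ebl_nil (d : Fin n → ℕ) : ebl d [] = [] := rfl

@[simp] lemma ebl_cons (d : Fin n → ℕ) (i : Fin n) (l : List (Fin n)) :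
    ebl d (i :: l) = replicate (d i) i ++ ebl d l := by
  simp [ebl]

lemma count_ebl (d : Fin n → ℕ) (l : List (Fin n)) (c : Fin n) :
    count c (ebl d l) = (l.map (fun i => if i = c then d i else 0)).sum := by
  induction l with
  | nil => simp
  | cons i l ih =>
    simp only [ebl_cons, count_append, ih, map_cons, sum_cons, count_replicate]
    congr 1
    by_cases h : i = c <;> simp [h]

lemma length_ebl (d : Fin n → ℕ) (l : List (Fin n)) :
    (ebl d l).length = (l.map d).sum := by
  induction l with
  | nil => simp
  | cons i l ih => simp [ih]

lemma pairwise_replicate' {α : Type*} {r : α → α → Prop} {a : α} (h : r a a) (c : ℕ) :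
    List.Pairwise r (replicate c a) := by
  induction c with
  | zero => simp
  | succ c ih =>
    rw [replicate_succ]
    refine List.Pairwise.cons ?_ ih
    intro b hb
    rw [eq_of_mem_replicate hb]
    exact h

lemma sorted_ebl (d : Fin n → ℕ) {l : List (Fin n)} (hl : List.Pairwise (· ≤ ·) l) :
    List.Pairwise (· ≤ ·) (ebl d l) := by
  induction l with
  | nil => simp [ebl]
  | cons i l ih =>
    rw [ebl_cons]
    rw [List.pairwise_append]
    refine ⟨pairwise_replicate' le_rfl _, ih hl.tail, ?_⟩
    intro x hx y hy
    rw [eq_of_mem_replicate hx]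
    obtain ⟨j, hj, hy⟩ := List.mem_flatMap.1 hy
    rw [eq_of_mem_replicate hy]
    exact (List.pairwise_cons.1 hl).1 j hj

/-- The canonical ordered list with given exponents. -/
def blockL (d : Fin n → ℕ) : List (Fin n) := ebl d (finRange n)

lemma count_blockL (d : Fin n → ℕ) (c : Fin n) : count c (blockL d) = d c := by
  rw [blockL, count_ebl, ← Fin.sum_univ_def]
  simp

lemma sorted_blockL (d : Fin n → ℕ) : List.Pairwise (· ≤ ·) (blockL d) :=
  sorted_ebl d (List.pairwise_le_finRange n)

lemma length_blockL (d : Fin n → ℕ) : (blockL d).length = ∑ i, d i := by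
  rw [blockL, length_ebl, ← Fin.sum_univ_def]

lemma sum_count_eq_length (idx : List (Fin n)) : ∑ i, idx.count i = idx.length := by
  induction idx with
  | nil => simp
  | cons x t ih =>
    simp only [List.count_cons, length_cons, Finset.sum_add_distrib, ih, beq_iff_eq]
    congr 1
    simp [Finset.sum_ite_eq]

lemma sorted_eq_blockL {idx : List (Fin n)} (h : List.Pairwise (· ≤ ·) idx) :
    idx = blockL (fun i => idx.count i) := by
  refine List.Perm.eq_of_pairwise' h (sorted_blockL _) ?_
  rw [List.perm_iff_count]
  intro c
  rw [count_blockL]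

lemma sorted_head_block {j : Fin n} :
    ∀ {t : List (Fin n)}, List.Pairwise (· ≤ ·) t → (∀ y ∈ t, j ≤ y) →
      ∃ l₂, t = replicate (t.count j) j ++ l₂ := by
  intro t
  induction t with
  | nil => exact fun _ _ => ⟨[], by simp⟩
  | cons y s ih =>
    intro hs hall
    by_cases hy : y = j
    · subst hy
      obtain ⟨l₂, hl₂⟩ := ih hs.tail (fun z hz => (List.pairwise_cons.1 hs).1 z hz |>.trans' (hall y (by simp)))
      refine ⟨l₂, ?_⟩
      rw [List.count_cons_self, replicate_succ, cons_append, ← hl₂]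
    · have hcount : (y :: s).count j = 0 := by
        rw [List.count_eq_zero]
        intro hj
        rcases List.mem_cons.1 hj with h | h
        · exact hy h.symm
        · have h1 : j ≤ y := hall y (by simp)
          have h2 : y ≤ j := (List.pairwise_cons.1 hs).1 j h
          exact hy (le_antisymm h2 h1)
      exact ⟨y :: s, by rw [hcount]; simp⟩

lemma sorted_count_split {idx : List (Fin n)} (h : List.Pairwise (· ≤ ·) idx) (j : Fin n) :
    ∃ l₁ l₂, idx = l₁ ++ replicate (idx.count j) j ++ l₂ := by
  induction idx with
  | nil => exact ⟨[], [], by simp⟩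
  | cons x t ih =>
    by_cases hx : x = j
    · subst hx
      obtain ⟨l₂, hl₂⟩ := sorted_head_block h.tail (fun y hy => (List.pairwise_cons.1 h).1 y hy)
      refine ⟨[], l₂, ?_⟩
      rw [List.count_cons_self, replicate_succ]
      simpa using hl₂
    · obtain ⟨l₁, l₂, hll⟩ := ih h.tail
      refine ⟨x :: l₁, l₂, ?_⟩
      have : (x :: t).count j = t.count j := by
        exact List.count_cons_of_ne (l := t) (fun hjx => hx hjx)
      rw [this, cons_append, cons_append, ← hll]

/-- Insertion sort from the right. -/
def msort (idx : List (Fin n)) : List (Fin n) :=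
  idx.foldl (fun s j => s.orderedInsert (· ≤ ·) j) []

@[simp] lemma msort_nil : msort (n := n) [] = [] := rfl

lemma msort_append (idx : List (Fin n)) (j : Fin n) :
    msort (idx ++ [j]) = (msort idx).orderedInsert (· ≤ ·) j := by
  simp [msort, List.foldl_append]

lemma msort_sorted (idx : List (Fin n)) : List.Pairwise (· ≤ ·) (msort idx) := by
  induction idx using List.reverseRecOn with
  | nil => simp [List.Pairwise]
  | append_singleton idx j ih =>
    rw [msort_append]
    exact List.Pairwise.orderedInsert j _ ih

lemma msort_perm (idx : List (Fin n)) : msort idx ~ idx := by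
  induction idx using List.reverseRecOn with
  | nil => simp
  | append_singleton idx j ih =>
    rw [msort_append]
    calc (msort idx).orderedInsert (· ≤ ·) j ~ j :: msort idx := List.perm_orderedInsert _ j _
      _ ~ j :: idx := ih.cons j
      _ ~ idx ++ [j] := (List.perm_append_singleton j idx).symm

end Lists

section Straighten

variable (p : ℕ) (pOp : L → L) {n : ℕ}

/-- Inserting a basis letter from the right into a sorted pure word. -/
lemma ins (e : Fin n → L) :
    ∀ (idx : List (Fin n)) (j : Fin n), idx.Pairwise (· ≤ ·) →
    ∃ z ∈ Wsp (k := k) p pOp idx.length,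
      pW p pOp (idx.map e) * rι k p pOp (e j)
        = pW p pOp ((idx.orderedInsert (· ≤ ·) j).map e) + z := by
  intro idx
  induction idx with
  | nil =>
    intro j _
    exact ⟨0, Submodule.zero_mem _, by simp [List.orderedInsert]⟩
  | cons x t ih =>
    intro j hs
    by_cases hj : j ≤ x
    · have hC := pW_mul_rι_eq (k := k) p pOp (e j) ((x :: t).map e)
      refine ⟨-(∑ t' ∈ Finset.range ((x :: t).map e).length,
          pW p pOp (((x :: t).map e).set t' ⁅e j, ((x :: t).map e).getD t' 0⁆)), ?_, ?_⟩
      · apply Submodule.neg_mem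
        apply Submodule.sum_mem
        intro t' _
        exact pW_mem_Wsp p pOp (by simp)
      · rw [hC]
        have hoi : List.orderedInsert (· ≤ ·) j (x :: t) = j :: x :: t := by
          simp [List.orderedInsert, hj]
        rw [hoi]
        simp [sub_eq_add_neg]
    · obtain ⟨z, hz, heq⟩ := ih j hs.of_cons
      have hoi : List.orderedInsert (· ≤ ·) j (x :: t) = x :: (t.orderedInsert (· ≤ ·) j) := by
        simp [List.orderedInsert, hj]
      refine ⟨rι k p pOp (e x) * z, Wsp_cons p pOp (e x) hz, ?_⟩
      rw [map_cons, pW_cons, mul_assoc, heq, mul_add, hoi, map_cons, pW_cons]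

/-- Straightening a pure word to its sorted form, modulo shorter words. -/
lemma sort_eq (e : Fin n → L) (idx : List (Fin n)) :
    ∃ z ∈ Wsp (k := k) p pOp (idx.length - 1),
      pW p pOp (idx.map e) = pW p pOp ((msort idx).map e) + z := by
  induction idx using List.reverseRecOn with
  | nil => exact ⟨0, Submodule.zero_mem _, by simp⟩
  | append_singleton idx j ih =>
    obtain ⟨z, hz, heq⟩ := ih
    obtain ⟨z₂, hz₂, heq₂⟩ := ins (k := k) p pOp e (msort idx) j (msort_sorted idx)
    have hlen : (msort idx).length = idx.length := (msort_perm idx).length_eq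
    by_cases hidx : idx = []
    · subst hidx
      refine ⟨0, Submodule.zero_mem _, ?_⟩
      simp [msort, List.orderedInsert]
    · have h1 : 1 ≤ idx.length := by
        cases idx with
        | nil => exact absurd rfl hidx
        | cons _ _ => simp
      refine ⟨z₂ + z * rι k p pOp (e j), ?_, ?_⟩
      · have hb : (idx ++ [j]).length - 1 = idx.length := by simp
        rw [hb]
        refine Submodule.add_mem _ (by rwa [hlen] at hz₂) ?_
        have := Wsp_mul_rι p pOp (e j) hz
        exact Wsp_mono p pOp (by omega) this
      · rw [map_append, pW_append, map_singleton, pW_singleton, heq, add_mul, heq₂,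
          msort_append, add_assoc]

/-- `pW` of a block list. -/
lemma pW_ebl (e : Fin n → L) (d : Fin n → ℕ) (l : List (Fin n)) :
    pW (k := k) p pOp ((ebl d l).map e) = (l.map (fun i => rι k p pOp (e i) ^ d i)).prod := by
  induction l with
  | nil => simp
  | cons i l ih =>
    rw [ebl_cons, List.map_append, pW_append, List.map_replicate, pW_replicate, ih,
      List.map_cons, List.prod_cons]

lemma eMonR_eq_pW (e : Fin n → L) (a : Fin n → Fin p) :
    eMonR k p pOp e a = pW p pOp ((blockL (fun i => ((a i : ℕ)))).map e) := by
  rw [blockL, pW_ebl]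
  rfl

/-- Collapsing `p` consecutive equal letters using the restricted relation. -/
lemma collapse (e : Fin n → L) (l₁ l₂ : List (Fin n)) (j : Fin n) (c : ℕ) (hc : p ≤ c) :
    pW (k := k) p pOp ((l₁ ++ replicate c j ++ l₂).map e)
      = pW p pOp (l₁.map e ++ pOp (e j) :: (replicate (c - p) (e j) ++ l₂.map e)) := by
  simp only [List.map_append, pW_append, List.map_replicate, pW_replicate, pW_cons]
  rw [show c = p + (c - p) by omega, pow_add, rι_pow]
  simp [mul_assoc]

end Straighten

section GspSect

variable (p : ℕ) (pOp : L → L) {H : LieSubalgebra k L} {pOpH : H → H}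
variable (φ : RUEA k H p pOpH →ₐ[k] RUEA k L p pOp) {n : ℕ} (e : Fin n → L)

/-- Span of `φ(w)·e^a` with `|a| ≤ m`. -/
def Gsp (m : ℕ) : Submodule k (RUEA k L p pOp) :=
  Submodule.span k {u | ∃ (w : RUEA k H p pOpH) (a : Fin n → Fin p),
    (∑ i, ((a i : ℕ))) ≤ m ∧ u = φ w * eMonR k p pOp e a}

lemma Gsp_mono {m m' : ℕ} (h : m ≤ m') : Gsp p pOp φ e m ≤ Gsp p pOp φ e m' :=
  Submodule.span_mono (fun _ ⟨w, a, ha, hu⟩ => ⟨w, a, ha.trans h, hu⟩)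

lemma Gsp_gen {m : ℕ} (w : RUEA k H p pOpH) (a : Fin n → Fin p)
    (h : (∑ i, ((a i : ℕ))) ≤ m) : φ w * eMonR k p pOp e a ∈ Gsp p pOp φ e m :=
  Submodule.subset_span ⟨w, a, h, rfl⟩

lemma Gsp_lmul {m : ℕ} (w : RUEA k H p pOpH) {u : RUEA k L p pOp}
    (hu : u ∈ Gsp p pOp φ e m) : φ w * u ∈ Gsp p pOp φ e m := by
  refine span_mul_mem (LinearMap.mulLeft k (φ w)) ?_ u hu
  rintro v ⟨w', a, ha, rfl⟩
  have : φ w * (φ w' * eMonR k p pOp e a) = φ (w * w') * eMonR k p pOp e a := by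
    rw [← mul_assoc, ← map_mul]
  rw [LinearMap.mulLeft_apply, this]
  exact Gsp_gen p pOp φ e _ a ha

end GspSect

section Master

variable (p : ℕ) (pOp : L → L) {H : LieSubalgebra k L} {pOpH : H → H}
variable (φ : RUEA k H p pOpH →ₐ[k] RUEA k L p pOp) {n : ℕ} (e : Fin n → L)

/-- Every word of length at most `m` lies in the span of `φ(w)·e^a` with `|a| ≤ m`. -/
lemma wordS (hp : 2 < p)
    (hφ : ∀ h : H, φ (rι k p pOpH h) = rι k p pOp (h : L))
    (hdecL : ∀ x : L, ∃ (c : Fin n → k) (hx : H), x = (∑ j, c j • e j) + (hx : L)) :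
    ∀ m (l : List L), l.length ≤ m → pW p pOp l ∈ Gsp p pOp φ e m := by
  intro m
  induction m using Nat.strong_induction_on with
  | _ m IHm =>
  have hR : ∀ (l : List L) (w : RUEA k H p pOpH) (idx : List (Fin n)),
      idx.Pairwise (· ≤ ·) → (∀ i, idx.count i ≤ p - 1) → idx.length + l.length ≤ m →
      φ w * pW p pOp (idx.map e) * pW p pOp l ∈ Gsp p pOp φ e m := by
    intro l
    induction l with
    | nil =>
      intro w idx hsort hcount hlen
      have ha : ∀ i, idx.count i < p := fun i => by have := hcount i; omega
      set a : Fin n → Fin p := fun i => ⟨idx.count i, ha i⟩ with hadef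
      have hidx : idx = blockL (fun i => ((a i : ℕ))) := sorted_eq_blockL hsort
      have hpw : pW (k := k) p pOp (idx.map e) = eMonR k p pOp e a := by
        rw [eMonR_eq_pW, ← hidx]
      rw [pW_nil, mul_one, hpw]
      apply Gsp_gen
      have hsum : (∑ i, ((a i : ℕ))) = idx.length := sum_count_eq_length idx
      rw [hsum]
      simpa using hlen
    | cons x l' ihl =>
      intro w idx hsort hcount hlen
      have hlen' : idx.length + l'.length + 1 ≤ m := by
        rw [List.length_cons] at hlen
        omega
      obtain ⟨c, hx, hxeq⟩ := hdecL x
      have hrx : rι k p pOp x = (∑ j, c j • rι k p pOp (e j)) + rι k p pOp (hx : L) := by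
        simp only [← rιL_apply (k := k) p pOp]
        rw [hxeq, map_add, map_sum]
        simp only [map_smul]
      rw [pW_cons, hrx, add_mul, mul_add]
      refine Submodule.add_mem _ ?_ ?_
      · -- sum of basis-letter parts
        rw [Finset.sum_mul, Finset.mul_sum]
        refine Submodule.sum_mem _ ?_
        intro j _
        rw [smul_mul_assoc, mul_smul_comm]
        refine Submodule.smul_mem _ _ ?_
        -- goal: φ w * pW (idx.map e) * (rι (e j) * pW l') ∈ Gsp m
        obtain ⟨z, hz, hins⟩ := ins (k := k) p pOp e idx j hsort
        rw [← mul_assoc, mul_assoc (φ w), hins, mul_add, add_mul]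
        refine Submodule.add_mem _ ?_ ?_
        · -- main sorted term
          by_cases hcj : idx.count j + 1 ≤ p - 1
          · refine ihl w (idx.orderedInsert (· ≤ ·) j)
              (List.Pairwise.orderedInsert j idx hsort) ?_ ?_
            · intro i
              rw [List.orderedInsert_count]
              by_cases hji : j = i
              · subst hji; simpa using hcj
              · simpa [hji] using hcount i
            · rw [List.orderedInsert_length]
              omega
          · -- the count hits p: collapse
            have hcj' : (idx.orderedInsert (· ≤ ·) j).count j = p := by
              rw [List.orderedInsert_count, if_pos rfl]
              have := hcount j
              omega
            obtain ⟨l₁, l₂, hsplit⟩ :=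
              sorted_count_split (List.Pairwise.orderedInsert j idx hsort) j
            rw [hcj'] at hsplit
            have hlsplit : l₁.length + p + l₂.length = idx.length + 1 := by
              have := congrArg List.length hsplit
              simp only [List.length_append, List.length_replicate,
                List.orderedInsert_length] at this
              omega
            rw [hsplit, collapse (k := k) p pOp e l₁ l₂ j p le_rfl]
            rw [mul_assoc, ← pW_append]
            apply Gsp_lmul
            have hm1 : m - 1 < m := by omega
            refine Gsp_mono p pOp φ e (Nat.sub_le m 1) (IHm (m - 1) hm1 _ ?_)
            simp only [List.length_append, List.length_cons, List.length_map,
              List.length_replicate]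
            omega
        · -- error term
          refine span_mul_mem
            ((LinearMap.mulRight k (pW (k := k) p pOp l')).comp
              (LinearMap.mulLeft k (φ w))) ?_ z hz
          rintro u ⟨lz, hlz, rfl⟩
          simp only [LinearMap.comp_apply, LinearMap.mulLeft_apply, LinearMap.mulRight_apply]
          rw [mul_assoc, ← pW_append]
          apply Gsp_lmul
          have hm1 : m - 1 < m := by omega
          refine Gsp_mono p pOp φ e (Nat.sub_le m 1) (IHm (m - 1) hm1 _ ?_)
          rw [List.length_append]
          omega
      · -- H-letter part
        have hC := pW_mul_rι_eq (k := k) p pOp (hx : L) (idx.map e)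
        rw [← mul_assoc, mul_assoc (φ w), hC, mul_sub, sub_mul]
        refine Submodule.sub_mem _ ?_ ?_
        · rw [← hφ hx, ← mul_assoc, ← map_mul]
          exact ihl (w * rι k p pOpH hx) idx hsort hcount (by omega)
        · rw [Finset.mul_sum, Finset.sum_mul]
          refine Submodule.sum_mem _ ?_
          intro t _
          rw [mul_assoc, ← pW_append]
          apply Gsp_lmul
          have hm1 : m - 1 < m := by omega
          refine Gsp_mono p pOp φ e (Nat.sub_le m 1) (IHm (m - 1) hm1 _ ?_)
          simp only [List.length_append, List.length_set, List.length_map]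
          omega
  intro l hl
  have h0 : (0 : ℕ) ≤ p - 1 := Nat.zero_le _
  have := hR l 1 [] (by simp) (fun i => by simpa using h0) (by simpa using hl)
  simpa using this

section MoreLists

variable {n : ℕ}

lemma set_get_self {α : Type*} (l : List α) (t : ℕ) (ht : t < l.length) :
    l.set t l[t] = l := by
  refine List.ext_getElem (by simp) ?_
  intro m h1 h2
  rw [List.getElem_set]
  split
  · subst ‹t = m›; rfl
  · rfl

lemma sum_range_get {α : Type*} (l : List α) (F : α → k) :
    ∑ t ∈ Finset.range l.length,
      (if ht : t < l.length then F (l.get ⟨t, ht⟩) else 0) = (l.map F).sum := by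
  induction l with
  | nil => simp
  | cons x l ih =>
    show (∑ t ∈ Finset.range (l.length + 1),
      if ht : t < l.length + 1 then F ((x :: l).get ⟨t, ht⟩) else 0) = (List.map F (x :: l)).sum
    rw [Finset.sum_range_succ']
    rw [List.map_cons, List.sum_cons, ← ih]
    have h0 : (if ht : (0:ℕ) < l.length + 1 then F ((x :: l).get ⟨0, ht⟩) else 0) = F x := by
      rw [dif_pos (Nat.succ_pos _)]; rfl
    have h2 : ∀ t ∈ Finset.range l.length,
        (if ht : t + 1 < l.length + 1 then F ((x :: l).get ⟨t + 1, ht⟩) else (0:k))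
          = (if ht : t < l.length then F (l.get ⟨t, ht⟩) else 0) := by
      intro t hmem
      rw [Finset.mem_range] at hmem
      rw [dif_pos (Nat.succ_lt_succ hmem), dif_pos hmem]
      simp [List.get_eq_getElem, List.getElem_cons_succ]
    rw [Finset.sum_congr rfl h2, h0, add_comm]

lemma sum_map_ebl (F : Fin n → k) (d : Fin n → ℕ) (l : List (Fin n)) :
    ((ebl d l).map F).sum = (l.map (fun i => (d i) • F i)).sum := by
  induction l with
  | nil => simp
  | cons i l ih =>
    rw [ebl_cons, List.map_append, List.sum_append, ih, List.map_replicate,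
      List.sum_replicate, List.map_cons, List.sum_cons]

end MoreLists

end Master

end Helpers

/-- The linear form `Λ` on `U'(𝔤)` sending `Σ_a v_a·e^a` to `ε_𝔥(v_{(p−1,…,p−1)})` is
well defined and belongs to `Coind'(k)` (the coinduction of the trivial one-dimensional
`U'(𝔥)`-module, whose membership condition is `Λ(h·u) = ε_𝔥(h)·Λ(u)`), and the action
of each `H ∈ 𝔥` on `Λ`, namely `(H·Λ)(u) = Λ(u·ι'(H))`, is multiplication by
`trad_{𝔤/𝔥}(H)`. -/
theorem statement12
    {k : Type*} [Field k] {L : Type*} [LieRing L] [LieAlgebra k L]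
    (p : ℕ) [CharP k p] (hp : 2 < p)
    (pOp : L → L)
    (hi : ∀ x y : L, ⁅pOp x, y⁆ = (LieAlgebra.ad k L x ^ p) y)
    (hii : ∀ (c : k) (x : L), pOp (c • x) = c ^ p • pOp x)
    (hiii : ∀ x y : L,
      UniversalEnvelopingAlgebra.ι k (pOp (x + y)) - UniversalEnvelopingAlgebra.ι k (pOp x)
          - UniversalEnvelopingAlgebra.ι k (pOp y)
        = UniversalEnvelopingAlgebra.ι k (x + y) ^ p - UniversalEnvelopingAlgebra.ι k x ^ p
          - UniversalEnvelopingAlgebra.ι k y ^ p)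
    (H : LieSubalgebra k L) [FiniteDimensional k (L ⧸ H.toSubmodule)]
    (pOpH : H → H) (hpOpH : ∀ h : H, (pOpH h : L) = pOp (h : L))
    (φ : RUEA k H p pOpH →ₐ[k] RUEA k L p pOp)
    (hφ : ∀ h : H, φ (rι k p pOpH h) = rι k p pOp (h : L))
    (n : ℕ) (e : Fin n → L)
    (hli : LinearIndependent k
      (fun i => Submodule.Quotient.mk (p := H.toSubmodule) (e i)))
    (hsp : Submodule.span k
      (Set.range fun i => Submodule.Quotient.mk (p := H.toSubmodule) (e i)) = ⊤)
    (hdec : ∀ u : RUEA k L p pOp, ∃! c : (Fin n → Fin p) → RUEA k L p pOp,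
      (∀ a, c a ∈ Set.range φ) ∧
        u = ∑ a : Fin n → Fin p, c a * eMonR k p pOp e a)
    (εH : RUEA k H p pOpH →ₐ[k] k)
    (hεH : ∀ h : H, εH (rι k p pOpH h) = 0) :
    ∃ Λ : RUEA k L p pOp →ₗ[k] k,
      (∀ c : (Fin n → Fin p) → RUEA k H p pOpH,
        Λ (∑ a : Fin n → Fin p, φ (c a) * eMonR k p pOp e a)
          = εH (c fun _ => (⟨p - 1, by omega⟩ : Fin p))) ∧
      (∀ (w : RUEA k H p pOpH) (u : RUEA k L p pOp),
        Λ (φ w * u) = εH w * Λ u) ∧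
      (∀ (h : H) (u : RUEA k L p pOp),
        Λ (u * rι k p pOp (h : L)) = trad H h * Λ u) := by
    classical
  letI : LieRing k := LieRing.ofAssociativeRing
  set T : ℕ := n * (p - 1) with hT
  set top : Fin n → Fin p := fun _ => ⟨p - 1, by omega⟩ with htop
  -- the counit of U'(𝔤)
  let εL : RUEA k L p pOp →ₐ[k] k := RingQuot.liftAlgHom k
    ⟨UniversalEnvelopingAlgebra.lift k (0 : L →ₗ⁅k⁆ k), by
      rintro x y ⟨X, rfl, rfl⟩
      rw [map_pow, UniversalEnvelopingAlgebra.lift_ι_apply,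
        UniversalEnvelopingAlgebra.lift_ι_apply]
      simp [zero_pow (by omega : p ≠ 0)]⟩
  have hεL : ∀ x : L, εL (rι k p pOp x) = 0 := by
    intro x
    show εL (RingQuot.mkAlgHom k (rRel k L p pOp) (UniversalEnvelopingAlgebra.ι k x)) = 0
    rw [RingQuot.liftAlgHom_mkAlgHom_apply, UniversalEnvelopingAlgebra.lift_ι_apply]
    rfl
  have hcomp : ∀ w, εL (φ w) = εH w := by
    have h2 : (εL.comp φ).comp (RingQuot.mkAlgHom k (rRel k (↥H) p pOpH))
        = εH.comp (RingQuot.mkAlgHom k (rRel k (↥H) p pOpH)) := by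
      apply UniversalEnvelopingAlgebra.hom_ext
      apply LieHom.ext
      intro hh
      show εL (φ (rι k p pOpH hh)) = εH (rι k p pOpH hh)
      rw [hφ, hεH, hεL]
    intro w
    obtain ⟨u, rfl⟩ := RingQuot.mkAlgHom_surjective k (rRel k (↥H) p pOpH) w
    exact AlgHom.congr_fun h2 u
  -- the basis of 𝔤/𝔥 and coefficient functions
  let b : Module.Basis (Fin n) k (L ⧸ H.toSubmodule) := Module.Basis.mk hli (by rw [hsp])
  let cf : L → Fin n → k := fun x j => b.repr (Submodule.Quotient.mk x) j
  have hbi : ∀ i, b i = Submodule.Quotient.mk (p := H.toSubmodule) (e i) :=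
    fun i => Module.Basis.mk_apply hli _ i
  have hcfdec : ∀ x : L, ∃ hx : H, x = (∑ j, cf x j • e j) + (hx : L) := by
    intro x
    have hker : x - ∑ j, cf x j • e j ∈ H.toSubmodule := by
      have h0 : H.toSubmodule.mkQ (x - ∑ j, cf x j • e j) = 0 := by
        rw [map_sub, map_sum]
        simp only [map_smul]
        have : ∀ j, H.toSubmodule.mkQ (e j) = b j := fun j => (hbi j).symm
        rw [Finset.sum_congr rfl (fun j _ => by rw [this j])]
        have hrep := Module.Basis.sum_repr b (H.toSubmodule.mkQ x)
        have : ∀ j, cf x j = b.repr (H.toSubmodule.mkQ x) j := fun j => rfl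
        rw [Finset.sum_congr rfl (fun j _ => by rw [this j]), hrep, sub_self]
      rwa [← LinearMap.mem_ker, Submodule.ker_mkQ] at h0
    refine ⟨⟨_, hker⟩, ?_⟩
    show x = (∑ j, cf x j • e j) + (x - ∑ j, cf x j • e j)
    abel
  have hdecL : ∀ x : L, ∃ (c : Fin n → k) (hx : H), x = (∑ j, c j • e j) + (hx : L) :=
    fun x => ⟨cf x, hcfdec x⟩
  have htr : ∀ h : H, trad H h = ∑ i, cf ⁅(h : L), e i⁆ i := by
    intro h
    rw [trad, LinearMap.trace_eq_matrix_trace k b, Matrix.trace]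
    refine Finset.sum_congr rfl (fun i _ => ?_)
    show (LinearMap.toMatrix b b) (adQuot H h) i i = _
    rw [LinearMap.toMatrix_apply, hbi]
    rfl
  -- the decomposition function
  let Dc : RUEA k L p pOp → (Fin n → Fin p) → RUEA k L p pOp := fun u => (hdec u).choose
  have hD1 : ∀ u, (∀ a, Dc u a ∈ Set.range φ) ∧
      u = ∑ a, Dc u a * eMonR k p pOp e a := fun u => (hdec u).choose_spec.1
  have hDu : ∀ u (c' : (Fin n → Fin p) → RUEA k L p pOp),
      ((∀ a, c' a ∈ Set.range φ) ∧ u = ∑ a, c' a * eMonR k p pOp e a) → c' = Dc u :=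
    fun u c' hc' => (hdec u).choose_spec.2 c' hc'
  have hDadd : ∀ u v, Dc (u + v) = fun a => Dc u a + Dc v a := by
    intro u v
    refine (hDu (u + v) _ ⟨?_, ?_⟩).symm
    · intro a
      obtain ⟨x, hx⟩ := (hD1 u).1 a
      obtain ⟨y, hy⟩ := (hD1 v).1 a
      exact ⟨x + y, by rw [map_add, hx, hy]⟩
    · calc u + v = (∑ a, Dc u a * eMonR k p pOp e a) + ∑ a, Dc v a * eMonR k p pOp e a := by
            rw [← (hD1 u).2, ← (hD1 v).2]
      _ = ∑ a, (Dc u a + Dc v a) * eMonR k p pOp e a := by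
            rw [← Finset.sum_add_distrib]
            exact Finset.sum_congr rfl (fun a _ => (add_mul _ _ _).symm)
  have hDsmul : ∀ (r : k) u, Dc (r • u) = fun a => r • Dc u a := by
    intro r u
    refine (hDu (r • u) _ ⟨?_, ?_⟩).symm
    · intro a
      obtain ⟨x, hx⟩ := (hD1 u).1 a
      exact ⟨r • x, by rw [map_smul, hx]⟩
    · calc r • u = r • ∑ a, Dc u a * eMonR k p pOp e a := by rw [← (hD1 u).2]
      _ = ∑ a, (r • Dc u a) * eMonR k p pOp e a := by
            rw [Finset.smul_sum]
            exact Finset.sum_congr rfl (fun a _ => (smul_mul_assoc _ _ _).symm)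
  let Λ : RUEA k L p pOp →ₗ[k] k :=
    { toFun := fun u => εL (Dc u top)
      map_add' := fun u v => by
        show εL (Dc (u + v) top) = εL (Dc u top) + εL (Dc v top)
        rw [hDadd u v]
        exact map_add εL _ _
      map_smul' := fun r u => by
        show εL (Dc (r • u) top) = r • εL (Dc u top)
        rw [hDsmul r u]
        exact map_smul εL r _ }
  have hΛdef : ∀ u, Λ u = εL (Dc u top) := fun u => rfl
  -- property 1
  have hP1 : ∀ c : (Fin n → Fin p) → RUEA k (↥H) p pOpH,
      Λ (∑ a, φ (c a) * eMonR k p pOp e a) = εH (c top) := by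
    intro c
    have hc : (fun a => φ (c a)) = Dc (∑ a, φ (c a) * eMonR k p pOp e a) :=
      hDu _ _ ⟨fun a => ⟨c a, rfl⟩, rfl⟩
    rw [hΛdef, ← hc]
    exact hcomp _
  -- property 2
  have hP2 : ∀ (w : RUEA k (↥H) p pOpH) (u : RUEA k L p pOp),
      Λ (φ w * u) = εH w * Λ u := by
    intro w u
    have hc : (fun a => φ w * Dc u a) = Dc (φ w * u) := by
      refine hDu _ _ ⟨?_, ?_⟩
      · intro a
        obtain ⟨x, hx⟩ := (hD1 u).1 a
        exact ⟨w * x, by rw [map_mul, hx]⟩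
      · calc φ w * u = φ w * ∑ a, Dc u a * eMonR k p pOp e a := by
              conv_lhs => rw [(hD1 u).2]
        _ = ∑ a, (φ w * Dc u a) * eMonR k p pOp e a := by
              rw [Finset.mul_sum]
              exact Finset.sum_congr rfl (fun a _ => (mul_assoc _ _ _).symm)
    rw [hΛdef, hΛdef, ← hc, map_mul, hcomp]
  refine ⟨Λ, hP1, hP2, ?_⟩
  -- straightening consequences
  have hword := wordS (k := k) p pOp φ e hp hφ hdecL
  have hΛgen : ∀ (w : RUEA k (↥H) p pOpH) (a : Fin n → Fin p),
      Λ (φ w * eMonR k p pOp e a) = if a = top then εH w else 0 := by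
    intro w a
    have hne : (fun bb => if bb = a then φ w else 0) = Dc (φ w * eMonR k p pOp e a) := by
      refine hDu _ _ ⟨?_, ?_⟩
      · intro bb
        by_cases hba : bb = a
        · exact ⟨w, by rw [if_pos hba]⟩
        · exact ⟨0, by rw [if_neg hba, map_zero]⟩
      · rw [Finset.sum_eq_single a (fun b _ hba => by rw [if_neg hba, zero_mul])
          (fun habs => absurd (Finset.mem_univ a) habs), if_pos rfl]
    rw [hΛdef, ← hne]
    by_cases hat : a = top
    · rw [if_pos hat]
      calc εL ((fun bb => if bb = a then φ w else 0) top)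
          = εL (if top = a then φ w else 0) := rfl
        _ = εH w := by rw [if_pos hat.symm, hcomp w]
    · rw [if_neg hat]
      calc εL ((fun bb => if bb = a then φ w else 0) top)
          = εL (if top = a then φ w else 0) := rfl
        _ = 0 := by rw [if_neg (fun hhh => hat hhh.symm), map_zero]
  have hΛG : ∀ m, m < T → ∀ u ∈ Gsp p pOp φ e m, Λ u = 0 := by
    intro m hm u hu
    have hle : Gsp p pOp φ e m ≤ LinearMap.ker Λ := by
      rw [Gsp, Submodule.span_le]
      rintro v ⟨w, a, ha, rfl⟩
      rw [SetLike.mem_coe, LinearMap.mem_ker, hΛgen w a]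
      have hna : ¬ a = top := by
        rintro rfl
        have hsum : (∑ i, ((top i : ℕ))) = T := by
          rw [hT]
          simp [htop, Finset.sum_const, Finset.card_univ, Fintype.card_fin, smul_eq_mul]
        omega
      rw [if_neg hna]
    exact LinearMap.mem_ker.1 (hle hu)
  have hΛword : ∀ l : List L, l.length < T → Λ (pW p pOp l) = 0 :=
    fun l hl => hΛG _ hl _ (hword l.length l le_rfl)
  have hΛWsp : ∀ m, m < T → ∀ z ∈ Wsp p pOp m, Λ z = 0 := by
    intro m hm z hz
    have hle : Wsp (k := k) p pOp m ≤ LinearMap.ker Λ := by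
      rw [Wsp, Submodule.span_le]
      rintro v ⟨l, hl, rfl⟩
      rw [SetLike.mem_coe, LinearMap.mem_ker]
      exact hΛword l (lt_of_le_of_lt hl hm)
    exact LinearMap.mem_ker.1 (hle hz)
  have hΛh : ∀ (hh : H) (u : RUEA k L p pOp), Λ (rι k p pOp (hh : L) * u) = 0 := by
    intro hh u
    rw [← hφ, hP2, hεH, zero_mul]
  have hΛtop : Λ (eMonR k p pOp e top) = 1 := by
    have h1 := hΛgen 1 top
    rw [map_one, one_mul, if_pos rfl, map_one] at h1
    exact h1
  have hbig : ∀ idx : List (Fin n), idx.length ≤ T → ∀ j, p ≤ idx.count j →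
      Λ (pW p pOp (idx.map e)) = 0 := by
    intro idx hlen j hcnt
    obtain ⟨z, hz, heq⟩ := sort_eq (k := k) p pOp e idx
    have hplen : p ≤ idx.length := le_trans hcnt (List.count_le_length (a := j) (l := idx))
    rw [heq, map_add]
    have hz0 : Λ z = 0 := hΛWsp (idx.length - 1) (by omega) z hz
    rw [hz0, add_zero]
    have hsc : (msort idx).count j = idx.count j := (msort_perm idx).count_eq j
    have hms : (msort idx).length = idx.length := (msort_perm idx).length_eq
    obtain ⟨l₁, l₂, hsplit⟩ := sorted_count_split (msort_sorted idx) j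
    have hlsp := congrArg List.length hsplit
    simp only [List.length_append, List.length_replicate] at hlsp
    rw [hsplit, collapse (k := k) p pOp e l₁ l₂ j _ (by rw [hsc]; exact hcnt)]
    apply hΛword
    simp only [List.length_append, List.length_cons, List.length_map, List.length_replicate]
    omega
  -- the key single-monomial computation
  have hMain : ∀ (hh : H) (a : Fin n → Fin p),
      Λ (eMonR k p pOp e a * rι k p pOp (hh : L)) = if a = top then trad H hh else 0 := by
    intro hh a
    set d : Fin n → ℕ := fun i => ((a i : ℕ)) with hd
    set bl : List (Fin n) := blockL d with hbl
    set el : List L := bl.map e with helx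
    have hellen : el.length = ∑ i, d i := by
      rw [helx, List.length_map, hbl, length_blockL]
    have hdle : ∀ i, d i ≤ p - 1 := by
      intro i
      have h2 := (a i).2
      have : d i = ((a i : ℕ)) := rfl
      omega
    have hsum_le : (∑ i, d i) ≤ T := by
      calc (∑ i, d i) ≤ ∑ _i : Fin n, (p - 1) := Finset.sum_le_sum (fun i _ => hdle i)
        _ = T := by
            rw [Finset.sum_const, Finset.card_univ, Fintype.card_fin, smul_eq_mul, hT]
    have hpwel : eMonR k p pOp e a = pW p pOp el := eMonR_eq_pW (k := k) p pOp e a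
    rw [hpwel, pW_mul_rι_eq (k := k) p pOp ((hh : L)) el, map_sub, map_sum, hΛh hh, zero_sub]
    by_cases hat : a = top
    · -- top case
      have hdeq : ∀ i, d i = p - 1 := by
        intro i
        show ((a i : ℕ)) = p - 1
        rw [hat]
      have hellT : el.length = T := by
        rw [hellen, Finset.sum_congr rfl (fun i _ => hdeq i), Finset.sum_const,
          Finset.card_univ, Fintype.card_fin, smul_eq_mul, hT]
      have hblT : bl.length = T := by
        have : el.length = bl.length := by rw [helx, List.length_map]
        omega
      have hpert : ∀ t ∈ Finset.range el.length,
          Λ (pW p pOp (el.set t ⁅(hh : L), el.getD t 0⁆))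
            = if ht : t < bl.length then
                (fun i => cf ⁅(hh : L), e i⁆ i) (bl.get ⟨t, ht⟩) else 0 := by
        intro t hmem
        rw [Finset.mem_range] at hmem
        have htb : t < bl.length := by
          have : el.length = bl.length := by rw [helx, List.length_map]
          omega
        rw [dif_pos htb]
        set it : Fin n := bl.get ⟨t, htb⟩ with hit
        have hgd : el.getD t 0 = e it := by
          rw [List.getD_eq_getElem _ _ hmem]
          simp only [helx, List.getElem_map]
          rw [hit, List.get_eq_getElem]
        rw [hgd]
        set Θ : L →ₗ[k] k :=
          Λ ∘ₗ (LinearMap.mulLeft k (pW p pOp (el.take t))) ∘ₗ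
            (LinearMap.mulRight k (pW p pOp (el.drop (t + 1)))) ∘ₗ (rιL p pOp) with hTheta
        have hΘ : ∀ x : L, Θ x = Λ (pW p pOp (el.set t x)) := by
          intro x
          rw [List.set_eq_take_cons_drop x hmem, pW_append, pW_cons]
          simp only [hTheta, LinearMap.comp_apply, LinearMap.mulLeft_apply,
            LinearMap.mulRight_apply, rιL_apply]
        have hΘe : ∀ j, Θ (e j) = if j = it then 1 else 0 := by
          intro j
          rw [hΘ]
          have hmapset : el.set t (e j) = (bl.set t j).map e := by
            rw [helx, List.map_set]
          rw [hmapset]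
          by_cases hji : j = it
          · rw [if_pos hji, hji]
            have hsg : bl.set t it = bl := by
              rw [hit, List.get_eq_getElem]
              exact set_get_self bl t htb
            rw [hsg, ← helx, ← hpwel, hat]
            exact hΛtop
          · rw [if_neg hji]
            have hbleq : bl.take t ++ bl[t] :: bl.drop (t + 1) = bl := by
              rw [← List.set_eq_take_cons_drop _ htb, set_get_self bl t htb]
            have hsetrw : bl.set t j = bl.take t ++ j :: bl.drop (t + 1) :=
              List.set_eq_take_cons_drop _ htb
            have hitne : j ≠ bl[t] := fun hcon => hji hcon
            have hcbl : bl.count j = d j := count_blockL d j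
            have hc1 : bl.count j = (bl.take t).count j + (bl.drop (t + 1)).count j := by
              conv_lhs => rw [← hbleq]
              rw [List.count_append, List.count_cons_of_ne (Ne.symm hitne)]
            have hc2 : (bl.set t j).count j
                = (bl.take t).count j + ((bl.drop (t + 1)).count j + 1) := by
              rw [hsetrw, List.count_append, List.count_cons_self]
            have hdj := hdeq j
            apply hbig (bl.set t j) (by rw [List.length_set]; omega) j
            omega
        have hΘH : ∀ hx : H, Θ ((hx : L)) = 0 := by
          intro hx
          rw [hΘ, List.set_eq_take_cons_drop _ hmem, pW_append, pW_cons, ← mul_assoc,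
            pW_mul_rι_eq (k := k) p pOp ((hx : L)) (el.take t), sub_mul, map_sub]
          have hA : Λ (rι k p pOp (hx : L) * pW p pOp (el.take t)
              * pW p pOp (el.drop (t + 1))) = 0 := by
            rw [mul_assoc, ← pW_append]
            exact hΛh hx _
          rw [hA, zero_sub, Finset.sum_mul, map_sum, neg_eq_zero]
          refine Finset.sum_eq_zero (fun s _ => ?_)
          rw [← pW_append]
          apply hΛword
          rw [List.length_append, List.length_set, List.length_take, List.length_drop]
          have h1 : t < el.length := hmem
          have h2 : el.length = T := hellT
          omega
        obtain ⟨hx, hxdec⟩ := hcfdec ⁅(hh : L), e it⁆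
        have hval : Θ ⁅(hh : L), e it⁆ = cf ⁅(hh : L), e it⁆ it := by
          conv_lhs => rw [hxdec]
          rw [map_add, map_sum, hΘH hx, add_zero]
          simp only [map_smul, hΘe, smul_eq_mul, mul_ite, mul_one, mul_zero]
          simp
        rw [← hΘ, hval]
      rw [Finset.sum_congr rfl hpert]
      have hlen2 : el.length = bl.length := by rw [helx, List.length_map]
      rw [hlen2, sum_range_get bl (fun i => cf ⁅(hh : L), e i⁆ i)]
      have hmsum : ((bl.map (fun i => cf ⁅(hh : L), e i⁆ i)).sum)
          = ∑ i, d i • cf ⁅(hh : L), e i⁆ i := by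
        rw [hbl, blockL, sum_map_ebl, ← Fin.sum_univ_def]
      rw [hmsum, Finset.sum_congr rfl (fun i _ => by rw [hdeq i]), ← Finset.smul_sum,
        ← htr hh, if_pos hat]
      have hpk : ((p : ℕ) : k) = 0 := CharP.cast_eq_zero k p
      have hcast : (((p - 1 : ℕ)) : k) = -1 := by
        rw [Nat.cast_sub (by omega : 1 ≤ p), hpk]
        simp
      rw [nsmul_eq_mul, hcast]
      ring
    · -- a ≠ top: everything dies
      have hlt : (∑ i, d i) < T := by
        have hex : ∃ i, d i ≠ p - 1 := by
          by_contra hcon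
          push_neg at hcon
          apply hat
          funext i
          exact Fin.ext (hcon i)
        obtain ⟨i0, hi0⟩ := hex
        have hstrict : d i0 < p - 1 := by have := hdle i0; omega
        calc (∑ i, d i) < ∑ _i : Fin n, (p - 1) :=
              Finset.sum_lt_sum (fun i _ => hdle i) ⟨i0, Finset.mem_univ _, hstrict⟩
          _ = T := by
              rw [Finset.sum_const, Finset.card_univ, Fintype.card_fin, smul_eq_mul, hT]
      rw [if_neg hat, neg_eq_zero]
      refine Finset.sum_eq_zero (fun t _ => ?_)
      apply hΛword
      rw [List.length_set]
      omega
  -- assembly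
  intro hh u
  conv_lhs => rw [(hD1 u).2]
  rw [Finset.sum_mul, map_sum]
  have hterm : ∀ a ∈ Finset.univ, Λ (Dc u a * eMonR k p pOp e a * rι k p pOp (hh : L))
      = εL (Dc u a) * (if a = top then trad H hh else 0) := by
    intro a _
    obtain ⟨w, hw⟩ := (hD1 u).1 a
    rw [← hw, mul_assoc, hP2, hMain hh a, hcomp w]
  rw [Finset.sum_congr rfl hterm]
  simp only [mul_ite, mul_zero]
  rw [Finset.sum_ite_eq' Finset.univ top (fun a => εL (Dc u a) * trad H hh)]
  rw [if_pos (Finset.mem_univ top), hΛdef u]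
  ring
end
end
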